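/- arXiv:1909.05265 — 7 statements merged into one kernel-verified Lean document; each statement's English description precedes it below -/
import Mathlib

section
/- For every positive real number x, the inequality 1/x + 1/2 < 1/(1 - e^{-x}) < 1/x + 1/2 + x/12 holds. -/
open Real Set

lemma pos_of_deriv_pos (f f' : ℝ → ℝ) (hd : ∀ x, HasDerivAt f (f' x) x)
    (h0 : f 0 = 0) (hp : ∀ x, 0 < x → 0 < f' x) : ∀ x, 0 < x → 0 < f x := by
  intro x hx
  have hc : Continuous f := by
    rw [continuous_iff_continuousAt]
    exact fun y => (hd y).continuousAt
  have hm : StrictMonoOn f (Set.Ici 0) := by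
    apply strictMonoOn_of_deriv_pos (convex_Ici 0) hc.continuousOn
    intro y hy
    rw [interior_Ici] at hy
    rw [(hd y).deriv]
    exact hp y hy
  have := hm Set.self_mem_Ici (Set.mem_Ici.mpr hx.le) hx
  linarith [h0 ▸ this]

lemma left_key : ∀ x : ℝ, 0 < x → 0 < (2 + x) - Real.exp x * (2 - x) := by
  apply pos_of_deriv_pos _ (fun x => 1 - Real.exp x * (1 - x))
  · intro x
    have h1 : HasDerivAt (fun x : ℝ => 2 + x - Real.exp x * (2 - x))
        (1 - (Real.exp x * (2 - x) + Real.exp x * (-1))) x :=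
      ((hasDerivAt_id' x).const_add 2).sub
        ((Real.hasDerivAt_exp x).mul ((hasDerivAt_id' x).const_sub 2))
    convert h1 using 1
    ring
  · simp
  · -- need 0 < 1 - e^x (1 - x) for x > 0
    apply pos_of_deriv_pos _ (fun x => x * Real.exp x)
    · intro x
      have h1 : HasDerivAt (fun x : ℝ => 1 - Real.exp x * (1 - x))
          (-(Real.exp x * (1 - x) + Real.exp x * (-1))) x :=
        ((Real.hasDerivAt_exp x).mul ((hasDerivAt_id' x).const_sub 1)).const_sub 1
      convert h1 using 1
      ring
    · simp
    · intro x hx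
      positivity

lemma right_key : ∀ x : ℝ, 0 < x →
    0 < Real.exp x * (x ^ 2 - 6 * x + 12) - (x ^ 2 + 6 * x + 12) := by
  apply pos_of_deriv_pos _ (fun x => Real.exp x * (x ^ 2 - 4 * x + 6) - (2 * x + 6))
  · intro x
    have h1 : HasDerivAt (fun x : ℝ => Real.exp x * (x ^ 2 - 6 * x + 12) - (x ^ 2 + 6 * x + 12))
        (Real.exp x * (x ^ 2 - 6 * x + 12) + Real.exp x * (2 * x - 6) - (2 * x + 6)) x := by
      have hp : HasDerivAt (fun x : ℝ => x ^ 2 - 6 * x + 12) (2 * x - 6) x := by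
        have := ((hasDerivAt_pow 2 x).sub ((hasDerivAt_id x).const_mul 6)).add_const 12
        exact this.congr_deriv (by ring)
      have hq : HasDerivAt (fun x : ℝ => x ^ 2 + 6 * x + 12) (2 * x + 6) x := by
        have := ((hasDerivAt_pow 2 x).add ((hasDerivAt_id x).const_mul 6)).add_const 12
        exact this.congr_deriv (by ring)
      exact ((Real.hasDerivAt_exp x).mul hp).sub hq
    convert h1 using 1
    ring
  · norm_num
  · apply pos_of_deriv_pos _ (fun x => Real.exp x * (x ^ 2 - 2 * x + 2) - 2)
    · intro x
      have h1 : HasDerivAt (fun x : ℝ => Real.exp x * (x ^ 2 - 4 * x + 6) - (2 * x + 6))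
          (Real.exp x * (x ^ 2 - 4 * x + 6) + Real.exp x * (2 * x - 4) - 2) x := by
        have hp : HasDerivAt (fun x : ℝ => x ^ 2 - 4 * x + 6) (2 * x - 4) x := by
          have := ((hasDerivAt_pow 2 x).sub ((hasDerivAt_id x).const_mul 4)).add_const 6
          exact this.congr_deriv (by ring)
        have hq : HasDerivAt (fun x : ℝ => 2 * x + 6) 2 x := by
          have := ((hasDerivAt_id x).const_mul 2).add_const 6
          exact this.congr_deriv (by ring)
        exact ((Real.hasDerivAt_exp x).mul hp).sub hq
      convert h1 using 1
      ring
    · norm_num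
    · apply pos_of_deriv_pos _ (fun x => x ^ 2 * Real.exp x)
      · intro x
        have h1 : HasDerivAt (fun x : ℝ => Real.exp x * (x ^ 2 - 2 * x + 2) - 2)
            (Real.exp x * (x ^ 2 - 2 * x + 2) + Real.exp x * (2 * x - 2)) x := by
          have hp : HasDerivAt (fun x : ℝ => x ^ 2 - 2 * x + 2) (2 * x - 2) x := by
            have := ((hasDerivAt_pow 2 x).sub ((hasDerivAt_id x).const_mul 2)).add_const 2
            exact this.congr_deriv (by ring)
          exact (((Real.hasDerivAt_exp x).mul hp)).sub_const 2
        convert h1 using 1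
        ring
      · norm_num
      · intro x hx
        positivity

theorem stmt_0 (x : ℝ) (hx : 0 < x) :
    1 / x + 1 / 2 < 1 / (1 - Real.exp (-x)) ∧
    1 / (1 - Real.exp (-x)) < 1 / x + 1 / 2 + x / 12 := by
  have he : 0 < Real.exp x := Real.exp_pos x
  have h1 : 1 < Real.exp x := Real.one_lt_exp_iff.mpr hx
  rw [Real.exp_neg]
  set u := (Real.exp x)⁻¹ with hu
  have hu0 : 0 < u := inv_pos.mpr he
  have hu1 : u < 1 := by rw [hu]; exact inv_lt_one_of_one_lt₀ h1
  have h2 : 0 < 1 - u := by linarith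
  have hux : Real.exp x * u = 1 := mul_inv_cancel₀ he.ne'
  have hl := left_key x hx
  have hr := right_key x hx
  have hl' : 2 - x < (2 + x) * u := by nlinarith [mul_pos hl hu0]
  have hr' : (x ^ 2 + 6 * x + 12) * u < x ^ 2 - 6 * x + 12 := by
    nlinarith [mul_pos hr hu0]
  constructor
  · have heq : 1 / x + 1 / 2 = (2 + x) / (2 * x) := by
      rw [div_add_div _ _ hx.ne' two_ne_zero, mul_comm]
      ring_nf
    rw [heq, div_lt_div_iff₀ (by positivity) h2]
    nlinarith [hl']
  · have heq : 1 / x + 1 / 2 + x / 12 = (12 + 6 * x + x ^ 2) / (12 * x) := by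
      field_simp
      ring
    rw [heq, div_lt_div_iff₀ h2 (by positivity)]
    nlinarith [hr']
end

section
/- For every positive real number x, e^{-x}/(1 - e^{-2x}) ≥ 1/(2x) - x/12. -/
open Real

lemma nonneg_of_deriv_aux (f f' : ℝ → ℝ) (hf : ∀ x, HasDerivAt f (f' x) x)
    (h0 : f 0 = 0) (hf' : ∀ x, 0 < x → 0 ≤ f' x) : ∀ x, 0 ≤ x → 0 ≤ f x := by
  intro x hx
  have hmono : MonotoneOn f (Set.Ici 0) := by
    apply monotoneOn_of_deriv_nonneg (convex_Ici 0)
    · exact fun y _ => (hf y).continuousAt.continuousWithinAt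
    · intro y hy
      exact ((hf y).differentiableAt).differentiableWithinAt
    · intro y hy
      rw [interior_Ici] at hy
      rw [(hf y).deriv]
      exact hf' y hy
  have := hmono (Set.self_mem_Ici) (Set.mem_Ici.2 hx) hx
  linarith [h0 ▸ this]

lemma key_ineq (x : ℝ) (hx : 0 ≤ x) :
    0 ≤ x ^ 2 * Real.sinh x + 6 * x - 6 * Real.sinh x := by
  set f2 : ℝ → ℝ := fun x => x ^ 2 * Real.sinh x + 4 * x * Real.cosh x - 4 * Real.sinh x with hf2
  set f1 : ℝ → ℝ := fun x => 2 * x * Real.sinh x + x ^ 2 * Real.cosh x + 6 - 6 * Real.cosh x with hf1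
  set f0 : ℝ → ℝ := fun x => x ^ 2 * Real.sinh x + 6 * x - 6 * Real.sinh x with hf0
  have h2 : ∀ y, 0 ≤ y → 0 ≤ f2 y := by
    apply nonneg_of_deriv_aux f2 (fun y => y ^ 2 * Real.cosh y + 6 * y * Real.sinh y)
    · intro y
      have h := (((hasDerivAt_pow 2 y).mul (Real.hasDerivAt_sinh y)).add
        (((hasDerivAt_id y).const_mul (4 : ℝ)).mul (Real.hasDerivAt_cosh y))).sub
        ((Real.hasDerivAt_sinh y).const_mul (4 : ℝ))
      rw [hf2]
      convert h using 1
      · rfl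
      · rfl
      · rfl
      · simp only [id_eq]; push_cast; ring
    · simp [hf2]
    · intro y hy
      have h1 : 0 ≤ Real.sinh y := Real.sinh_nonneg_iff.2 hy.le
      have h2 : 0 < Real.cosh y := Real.cosh_pos y
      positivity
  have h1 : ∀ y, 0 ≤ y → 0 ≤ f1 y := by
    apply nonneg_of_deriv_aux f1 f2
    · intro y
      have h := (((((hasDerivAt_id y).const_mul (2 : ℝ)).mul (Real.hasDerivAt_sinh y)).add
        ((hasDerivAt_pow 2 y).mul (Real.hasDerivAt_cosh y))).add_const (6 : ℝ)).sub
        ((Real.hasDerivAt_cosh y).const_mul (6 : ℝ))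
      rw [hf1, hf2]
      convert h using 1
      · rfl
      · rfl
      · rfl
      · simp only [id_eq]; push_cast; ring
    · simp [hf1]
    · exact fun y hy => h2 y hy.le
  have h0 : ∀ y, 0 ≤ y → 0 ≤ f0 y := by
    apply nonneg_of_deriv_aux f0 f1
    · intro y
      have h := (((hasDerivAt_pow 2 y).mul (Real.hasDerivAt_sinh y)).add
        ((hasDerivAt_id y).const_mul (6 : ℝ))).sub
        ((Real.hasDerivAt_sinh y).const_mul (6 : ℝ))
      rw [hf0, hf1]
      convert h using 1
      · rfl
      · rfl
      · rfl
      · simp only [id_eq]; push_cast; ring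
    · simp [hf0]
    · exact fun y hy => h1 y hy.le
  exact h0 x hx

theorem stmt_1 (x : ℝ) (hx : 0 < x) :
    Real.exp (-x) / (1 - Real.exp (-2 * x)) ≥ 1 / (2 * x) - x / 12 := by
  have hs : 0 < Real.sinh x := Real.sinh_pos_iff.2 hx
  have heq : Real.exp (-x) / (1 - Real.exp (-2 * x)) = 1 / (2 * Real.sinh x) := by
    have hprod : Real.exp (-x) * (Real.exp x - Real.exp (-x)) = 1 - Real.exp (-2 * x) := by
      rw [mul_sub, ← Real.exp_add, ← Real.exp_add, neg_add_cancel, Real.exp_zero,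
        show (-x) + (-x) = -2 * x by ring]
    have hd : 0 < Real.exp x - Real.exp (-x) := by
      rw [Real.sinh_eq] at hs; linarith
    rw [Real.sinh_eq, ← hprod]
    rw [div_eq_div_iff (by positivity) (by positivity)]
    ring
  rw [heq, ge_iff_le]
  have key := key_ineq x hx.le
  rw [show (1 / (2 * x) - x / 12 : ℝ) = (6 - x ^ 2) / (12 * x) by field_simp; ring]
  rw [div_le_div_iff₀ (by positivity) (by positivity)]
  nlinarith
end

section
/- Let α, β > 0 be real, z a real number, and a a positive integer with a > max(-z, 0) and additionally a > β/α. Then the sum over integers n ≥ a of n^β · e^{-α(z+n)^2} is at most a^β e^{-α(a+z)^2} / (1 - e^{-2α(a+z)}). -/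
theorem stmt_4 (α β z : ℝ) (a : ℕ) (hα : 0 < α) (hβ : 0 < β)
    (ha : (a : ℝ) > max (-z) 0) (hab : (a : ℝ) > β / α) :
    Summable (fun n : ℕ => ((a + n : ℝ)) ^ β * Real.exp (-α * (z + (a + n)) ^ 2)) ∧
    (∑' n : ℕ, ((a + n : ℝ)) ^ β * Real.exp (-α * (z + (a + n)) ^ 2))
      ≤ (a : ℝ) ^ β * Real.exp (-α * ((a : ℝ) + z) ^ 2) /
        (1 - Real.exp (-2 * α * ((a : ℝ) + z))) := by
  obtain ⟨hz, ha0⟩ := max_lt_iff.mp ha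
  have haz : 0 < (a:ℝ) + z := by linarith
  have hba : β < α * a := by
    rw [gt_iff_lt, div_lt_iff₀ hα] at hab
    linarith
  set r : ℝ := Real.exp (-2 * α * ((a:ℝ) + z)) with hr
  have hr0 : 0 < r := Real.exp_pos _
  have hr1 : r < 1 := by
    rw [hr, Real.exp_lt_one_iff]
    nlinarith
  set C : ℝ := (a:ℝ) ^ β * Real.exp (-α * ((a:ℝ) + z) ^ 2) with hC
  have hC0 : 0 ≤ C := mul_nonneg (Real.rpow_nonneg ha0.le _) (Real.exp_pos _).le
  have key : ∀ n : ℕ, ((a + n : ℝ)) ^ β * Real.exp (-α * (z + (a + n)) ^ 2) ≤ C * r ^ n := by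
    intro n
    have hn0 : (0:ℝ) ≤ n := n.cast_nonneg
    have hnn : (n:ℝ) ≤ (n:ℝ)^2 := by exact_mod_cast Nat.le_self_pow two_ne_zero n
    have step1 : ((a:ℝ) + n) ^ β ≤ (a:ℝ) ^ β * Real.exp (β * n / a) := by
      have h1 : (a:ℝ) + n = a * (1 + n / a) := by field_simp
      have h2 : (0:ℝ) < 1 + n / a := by positivity
      rw [h1, Real.mul_rpow ha0.le h2.le]
      gcongr
      rw [Real.rpow_def_of_pos h2]
      apply Real.exp_le_exp.mpr
      have hlog : Real.log (1 + n / a) ≤ n / a := by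
        have := Real.log_le_sub_one_of_pos h2
        linarith
      calc Real.log (1 + n / a) * β ≤ (n / a) * β :=
            mul_le_mul_of_nonneg_right hlog hβ.le
        _ = β * n / a := by ring
    have hkey2 : β * n / a ≤ α * (n:ℝ)^2 := by
      rw [div_le_iff₀ ha0]
      nlinarith
    calc ((a:ℝ) + n) ^ β * Real.exp (-α * (z + ((a:ℝ) + n)) ^ 2)
        ≤ ((a:ℝ) ^ β * Real.exp (β * n / a)) * Real.exp (-α * (z + ((a:ℝ) + n)) ^ 2) := by
          exact mul_le_mul_of_nonneg_right step1 (Real.exp_pos _).le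
      _ = (a:ℝ) ^ β * Real.exp (β * n / a + -α * (z + ((a:ℝ) + n)) ^ 2) := by
          rw [mul_assoc, ← Real.exp_add]
      _ ≤ (a:ℝ) ^ β * Real.exp (-α * ((a:ℝ) + z) ^ 2 + n * (-2 * α * ((a:ℝ) + z))) := by
          apply mul_le_mul_of_nonneg_left _ (Real.rpow_nonneg ha0.le _)
          apply Real.exp_le_exp.mpr
          nlinarith [hkey2]
      _ = C * r ^ n := by
          rw [hC, hr, Real.exp_add, ← Real.exp_nat_mul]
          ring
  have hgeom : Summable (fun n : ℕ => C * r ^ n) :=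
    (summable_geometric_of_lt_one hr0.le hr1).mul_left C
  have hnonneg : ∀ n : ℕ, 0 ≤ ((a + n : ℝ)) ^ β * Real.exp (-α * (z + (a + n)) ^ 2) := by
    intro n
    have : (0:ℝ) ≤ (a:ℝ) + n := by positivity
    exact mul_nonneg (Real.rpow_nonneg this _) (Real.exp_pos _).le
  have hsum : Summable (fun n : ℕ => ((a + n : ℝ)) ^ β * Real.exp (-α * (z + (a + n)) ^ 2)) :=
    Summable.of_nonneg_of_le hnonneg key hgeom
  refine ⟨hsum, ?_⟩
  calc (∑' n : ℕ, ((a + n : ℝ)) ^ β * Real.exp (-α * (z + (a + n)) ^ 2))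
      ≤ ∑' n : ℕ, C * r ^ n := Summable.tsum_le_tsum key hsum hgeom
    _ = C * (1 - r)⁻¹ := by rw [tsum_mul_left, tsum_geometric_of_lt_one hr0.le hr1]
    _ = C / (1 - r) := by rw [div_eq_mul_inv]
end

section
/- For every real x in [-1/2, 1/2], cos(2πx) ≤ exp(-(2πx)^2 / 2). -/
open Real

private lemma mono_from_deriv (f : ℝ → ℝ) (hf : Differentiable ℝ f)
    (hd : ∀ t : ℝ, 0 ≤ t → 0 ≤ deriv f t) {s : ℝ} (hs : 0 ≤ s) : f 0 ≤ f s := by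
  have := monotoneOn_of_deriv_nonneg (convex_Ici (0:ℝ)) hf.continuous.continuousOn
    (hf.differentiableOn) (fun t ht => hd t (le_of_lt (by simpa using ht)))
  exact this (Set.self_mem_Ici) hs hs

private lemma exp_neg_hasDeriv (u : ℝ) :
    HasDerivAt (fun t : ℝ => Real.exp (-t)) (-Real.exp (-u)) u := by
  simpa [Function.comp_def] using ((Real.hasDerivAt_exp (-u)).comp u ((hasDerivAt_id u).neg))

private lemma sin_ge_cubic (t : ℝ) (ht : 0 ≤ t) : t - t^3/6 ≤ Real.sin t := by
  have key := mono_from_deriv (fun t => Real.sin t - t + t^3/6)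
    (by fun_prop) (fun u hu => by
      have H : HasDerivAt (fun t : ℝ => Real.sin t - t + t^3/6)
          (Real.cos u - 1 + ((3:ℕ) * u ^ 2)/6) u :=
        ((Real.hasDerivAt_sin u).sub (hasDerivAt_id u)).add ((hasDerivAt_pow 3 u).div_const 6)
      rw [H.deriv]
      have := Real.one_sub_sq_div_two_le_cos (x := u)
      push_cast
      linarith) ht
  norm_num at key
  linarith

private lemma cos_le_quartic (t : ℝ) (ht : 0 ≤ t) : Real.cos t ≤ 1 - t^2/2 + t^4/24 := by
  have key := mono_from_deriv (fun t => 1 - t^2/2 + t^4/24 - Real.cos t)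
    (by fun_prop) (fun u hu => by
      have H : HasDerivAt (fun t : ℝ => 1 - t^2/2 + t^4/24 - Real.cos t)
          (0 - ((2:ℕ) * u ^ 1)/2 + ((4:ℕ) * u ^ 3)/24 - (-Real.sin u)) u :=
        (((hasDerivAt_const u (1:ℝ)).sub ((hasDerivAt_pow 2 u).div_const 2)).add
          ((hasDerivAt_pow 4 u).div_const 24)).sub (Real.hasDerivAt_cos u)
      rw [H.deriv]
      have := sin_ge_cubic u hu
      push_cast
      nlinarith) ht
  norm_num at key
  linarith

private lemma exp_neg_le_quad (s : ℝ) (hs : 0 ≤ s) : Real.exp (-s) ≤ 1 - s + s^2/2 := by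
  have key := mono_from_deriv (fun t => 1 - t + t^2/2 - Real.exp (-t))
    (by fun_prop) (fun u hu => by
      have H : HasDerivAt (fun t : ℝ => 1 - t + t^2/2 - Real.exp (-t))
          (0 - 1 + ((2:ℕ) * u ^ 1)/2 - (-Real.exp (-u))) u :=
        (((hasDerivAt_const u (1:ℝ)).sub (hasDerivAt_id u)).add
          ((hasDerivAt_pow 2 u).div_const 2)).sub (exp_neg_hasDeriv u)
      rw [H.deriv]
      have := Real.add_one_le_exp (-u)
      push_cast
      linarith) hs
  norm_num at key
  linarith

private lemma exp_neg_ge_cubic (s : ℝ) (hs : 0 ≤ s) :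
    1 - s + s^2/2 - s^3/6 ≤ Real.exp (-s) := by
  have key := mono_from_deriv (fun t => Real.exp (-t) - (1 - t + t^2/2 - t^3/6))
    (by fun_prop) (fun u hu => by
      have H : HasDerivAt (fun t : ℝ => Real.exp (-t) - (1 - t + t^2/2 - t^3/6))
          (-Real.exp (-u) - (0 - 1 + ((2:ℕ) * u ^ 1)/2 - ((3:ℕ) * u ^ 2)/6)) u :=
        (exp_neg_hasDeriv u).sub ((((hasDerivAt_const u (1:ℝ)).sub (hasDerivAt_id u)).add
          ((hasDerivAt_pow 2 u).div_const 2)).sub ((hasDerivAt_pow 3 u).div_const 6))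
      rw [H.deriv]
      have := exp_neg_le_quad u hu
      push_cast
      linarith) hs
  norm_num at key
  linarith

theorem stmt_6 (x : ℝ) (hx : x ∈ Set.Icc (-(1:ℝ)/2) (1/2)) :
    Real.cos (2 * Real.pi * x) ≤ Real.exp (-(2 * Real.pi * x) ^ 2 / 2) := by
  obtain ⟨h1, h2⟩ := hx
  set t := 2 * Real.pi * x with hT
  have hpi := Real.pi_pos
  have habs : |t| ≤ Real.pi := by
    rw [abs_le]
    constructor <;> nlinarith
  have hcos_abs : Real.cos t = Real.cos |t| := by
    rcases abs_cases t with ⟨h, _⟩ | ⟨h, _⟩ <;> rw [h] <;> simp [Real.cos_neg]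
  have hsq : t ^ 2 = |t| ^ 2 := (sq_abs t).symm
  set a := |t| with ha
  have ha0 : 0 ≤ a := abs_nonneg t
  rw [hcos_abs, hsq, neg_div]
  by_cases hc : a ≤ 2
  · have hcb := cos_le_quartic a ha0
    have heb := exp_neg_ge_cubic (a^2/2) (by positivity)
    have hring : 1 - a^2/2 + (a^2/2)^2/2 - (a^2/2)^3/6
        = 1 - a^2/2 + a^4/8 - a^6/48 := by ring
    rw [hring] at heb
    have h4 : 0 ≤ a^4 * (4 - a^2) := by
      apply mul_nonneg (by positivity)
      nlinarith
    nlinarith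
  · push_neg at hc
    have hcn : Real.cos a ≤ 0 := by
      apply Real.cos_nonpos_of_pi_div_two_le_of_le
      · nlinarith [Real.pi_lt_d2]
      · linarith
    have := Real.exp_pos (-(a^2/2))
    linarith
end

section
/- For σ > 0 and real z with -1 < z < 1, the Jacobi theta value θ₃(z, iσ) satisfies the two-sided bound σ^{-1/2} e^{-πz²/σ} ≤ θ₃(z, iσ) ≤ σ^{-1/2} ( e^{-πz²/σ} + e^{-π(1+z)²/σ}/(1 - e^{-2π(1+z)/σ}) + e^{-π(1-z)²/σ}/(1 - e^{-2π(1-z)/σ}) ). -/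
/-- Periodized-Gaussian representation of the Jacobi theta value θ₃(z, iσ). -/
noncomputable def jacobiTheta3R (z σ : ℝ) : ℝ :=
  σ ^ (-(1 : ℝ) / 2) * ∑' m : ℤ, Real.exp (-(Real.pi / σ) * (z + m) ^ 2)

open Real

-- geometric-type bound for one side
lemma aux_key (σ w : ℝ) (hσ : 0 < σ) (hw : 0 < w) (n : ℕ) :
    Real.exp (-(Real.pi / σ) * (w + n) ^ 2)
      ≤ Real.exp (-Real.pi * w ^ 2 / σ) * Real.exp (-2 * Real.pi * w / σ) ^ n := by
  rw [← Real.exp_nat_mul, ← Real.exp_add]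
  apply Real.exp_le_exp.2
  rw [← sub_nonneg]
  have h : -Real.pi * w ^ 2 / σ + (n : ℝ) * (-2 * Real.pi * w / σ) - -(Real.pi / σ) * (w + n) ^ 2
      = (Real.pi / σ) * (n : ℝ) ^ 2 := by ring
  rw [h]
  positivity

lemma aux_r_lt (σ w : ℝ) (hσ : 0 < σ) (hw : 0 < w) :
    Real.exp (-2 * Real.pi * w / σ) < 1 := by
  apply Real.exp_lt_one_iff.2
  have h : -2 * Real.pi * w / σ = -(2 * Real.pi * w / σ) := by ring
  rw [h, neg_lt_zero]
  positivity

lemma aux_summable (σ w : ℝ) (hσ : 0 < σ) (hw : 0 < w) :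
    Summable fun n : ℕ => Real.exp (-(Real.pi / σ) * (w + n) ^ 2) := by
  apply Summable.of_nonneg_of_le (fun n => (Real.exp_pos _).le) (aux_key σ w hσ hw)
  exact (summable_geometric_of_lt_one (Real.exp_pos _).le (aux_r_lt σ w hσ hw)).mul_left _

lemma aux_tsum_le (σ w : ℝ) (hσ : 0 < σ) (hw : 0 < w) :
    ∑' n : ℕ, Real.exp (-(Real.pi / σ) * (w + n) ^ 2)
      ≤ Real.exp (-Real.pi * w ^ 2 / σ) / (1 - Real.exp (-2 * Real.pi * w / σ)) := by
  have hg := summable_geometric_of_lt_one (Real.exp_pos (-2 * Real.pi * w / σ)).le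
    (aux_r_lt σ w hσ hw)
  calc ∑' n : ℕ, Real.exp (-(Real.pi / σ) * (w + n) ^ 2)
      ≤ ∑' n : ℕ, Real.exp (-Real.pi * w ^ 2 / σ) * Real.exp (-2 * Real.pi * w / σ) ^ n :=
        Summable.tsum_le_tsum (aux_key σ w hσ hw) (aux_summable σ w hσ hw) (hg.mul_left _)
    _ = _ := by
        rw [tsum_mul_left, tsum_geometric_of_lt_one (Real.exp_pos _).le (aux_r_lt σ w hσ hw)]
        exact (div_eq_mul_inv _ _).symm

theorem stmt_9 (z σ : ℝ) (hσ : 0 < σ) (hz₁ : -1 < z) (hz₂ : z < 1) :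
    σ ^ (-(1 : ℝ) / 2) * Real.exp (-Real.pi * z ^ 2 / σ) ≤ jacobiTheta3R z σ ∧
    jacobiTheta3R z σ ≤ σ ^ (-(1 : ℝ) / 2) *
      (Real.exp (-Real.pi * z ^ 2 / σ)
        + Real.exp (-Real.pi * (1 + z) ^ 2 / σ) / (1 - Real.exp (-2 * Real.pi * (1 + z) / σ))
        + Real.exp (-Real.pi * (1 - z) ^ 2 / σ) / (1 - Real.exp (-2 * Real.pi * (1 - z) / σ))) := by
  have hp : 0 < (1 + z) := by linarith
  have hm : 0 < (1 - z) := by linarith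
  set f : ℤ → ℝ := fun m => Real.exp (-(Real.pi / σ) * (z + m) ^ 2) with hf
  have hσ' : (0:ℝ) ≤ σ ^ (-(1 : ℝ) / 2) := Real.rpow_nonneg hσ.le _
  have h1 : ∀ n : ℕ, f (n + 1) = Real.exp (-(Real.pi / σ) * ((1 + z) + n) ^ 2) := by
    intro n; simp only [hf]; push_cast; ring_nf
  have h2 : ∀ n : ℕ, f (-(n + 1)) = Real.exp (-(Real.pi / σ) * ((1 - z) + n) ^ 2) := by
    intro n; simp only [hf]; push_cast; ring_nf
  have hs1 : Summable fun n : ℕ => f (n + 1) := by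
    simpa only [h1] using aux_summable σ (1 + z) hσ hp
  have hs2 : Summable fun n : ℕ => f (-(n + 1)) := by
    simpa only [h2] using aux_summable σ (1 - z) hσ hm
  have hsum : Summable f := Summable.of_add_one_of_neg_add_one hs1 hs2
  have hsplit : ∑' m : ℤ, f m = (∑' n : ℕ, f (n + 1)) + f 0 + ∑' n : ℕ, f (-(n + 1)) :=
    tsum_of_add_one_of_neg_add_one hs1 hs2
  have hf0 : f 0 = Real.exp (-Real.pi * z ^ 2 / σ) := by
    simp only [hf]; norm_num; ring_nf
  constructor
  · apply mul_le_mul_of_nonneg_left _ hσ'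
    rw [← hf0]
    exact Summable.le_tsum hsum 0 fun j _ => (Real.exp_pos _).le
  · apply mul_le_mul_of_nonneg_left _ hσ'
    rw [hsplit, hf0]
    have b1 : ∑' n : ℕ, f (n + 1)
        ≤ Real.exp (-Real.pi * (1 + z) ^ 2 / σ) / (1 - Real.exp (-2 * Real.pi * (1 + z) / σ)) := by
      simpa only [h1] using aux_tsum_le σ (1 + z) hσ hp
    have b2 : ∑' n : ℕ, f (-(n + 1))
        ≤ Real.exp (-Real.pi * (1 - z) ^ 2 / σ) / (1 - Real.exp (-2 * Real.pi * (1 - z) / σ)) := by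
      simpa only [h2] using aux_tsum_le σ (1 - z) hσ hm
    linarith
end

section
/- Let τ > 0 and z ∈ (-1/2, 1/2). Then |θ₃(iτz, iτ) - 1| ≤ 2 e^{-πτ(1 - 2|z|)} / (1 - e^{-2πτ}), where θ₃(iτz, iτ) = ∑_{m∈ℤ} exp(-πτm² - 2πτmz) (a real number). -/
theorem stmt_10 (τ z : ℝ) (hτ : 0 < τ) (hz : z ∈ Set.Ioo (-(1:ℝ)/2) (1/2)) :
    |(∑' m : ℤ, Real.exp (-Real.pi * τ * (m : ℝ) ^ 2 - 2 * Real.pi * τ * m * z)) - 1|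
      ≤ 2 * Real.exp (-Real.pi * τ * (1 - 2 * |z|)) / (1 - Real.exp (-2 * Real.pi * τ)) := by
  obtain ⟨hz1, hz2⟩ := hz
  have hza : |z| < 1/2 := abs_lt.mpr ⟨by linarith, hz2⟩
  have hza0 : (0:ℝ) ≤ |z| := abs_nonneg z
  have hπ := Real.pi_pos
  set f : ℤ → ℝ := fun m => Real.exp (-Real.pi * τ * (m : ℝ) ^ 2 - 2 * Real.pi * τ * m * z)
    with hf
  set C : ℝ := Real.exp (-Real.pi * τ * (1 - 2 * |z|)) with hC
  set r : ℝ := Real.exp (-2 * Real.pi * τ) with hr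
  have hr0 : (0:ℝ) ≤ r := (Real.exp_pos _).le
  have hr1 : r < 1 := by
    rw [hr, Real.exp_lt_one_iff]
    nlinarith
  set g : ℕ → ℝ := fun n => C * r ^ n with hg
  have hgs : HasSum g (C * (1 - r)⁻¹) := (hasSum_geometric_of_lt_one hr0 hr1).mul_left C
  have key : ∀ w : ℝ, |w| ≤ |z| → ∀ n : ℕ, f ((n : ℤ) + 1) * Real.exp (0) ≤ g n := by
    intro w _ n
    simp only [hf, hg, hC, hr, Real.exp_zero, mul_one, ← Real.exp_nat_mul, ← Real.exp_add]
    apply Real.exp_le_exp.mpr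
    push_cast
    have h1 : -(((n:ℝ)+1) * (2 * Real.pi * τ * z)) ≤ ((n:ℝ)+1) * (2 * Real.pi * τ * |z|) := by
      nlinarith [mul_nonneg (show (0:ℝ) ≤ ((n:ℝ)+1) * (2 * Real.pi * τ) by positivity)
        (show (0:ℝ) ≤ z + |z| by linarith [neg_abs_le z])]
    have hnsq : (n:ℝ) ≤ (n:ℝ)^2 := by
      exact_mod_cast Nat.le_self_pow two_ne_zero n
    have hmain : (1 - 2*|z|) + 2*(n:ℝ) ≤ ((n:ℝ)+1)^2 - 2*((n:ℝ)+1)*|z| := by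
      nlinarith [mul_nonneg (Nat.cast_nonneg (α := ℝ) n) (show (0:ℝ) ≤ 1 - 2*|z| by linarith)]
    have h2 := mul_le_mul_of_nonneg_left hmain (mul_pos hπ hτ).le
    nlinarith [h1, h2]
  have hle₁ : ∀ n : ℕ, f ((n : ℤ) + 1) ≤ g n := by
    intro n
    simpa using key z le_rfl n
  have hle₂ : ∀ n : ℕ, f (-((n : ℤ) + 1)) ≤ g n := by
    intro n
    simp only [hf, hg, hC, hr, ← Real.exp_nat_mul, ← Real.exp_add]
    apply Real.exp_le_exp.mpr
    push_cast
    have h1 : ((n:ℝ)+1) * (2 * Real.pi * τ * z) ≤ ((n:ℝ)+1) * (2 * Real.pi * τ * |z|) := by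
      nlinarith [mul_nonneg (show (0:ℝ) ≤ ((n:ℝ)+1) * (2 * Real.pi * τ) by positivity)
        (show (0:ℝ) ≤ |z| - z by linarith [le_abs_self z])]
    have hnsq : (n:ℝ) ≤ (n:ℝ)^2 := by
      exact_mod_cast Nat.le_self_pow two_ne_zero n
    have hmain : (1 - 2*|z|) + 2*(n:ℝ) ≤ ((n:ℝ)+1)^2 - 2*((n:ℝ)+1)*|z| := by
      nlinarith [mul_nonneg (Nat.cast_nonneg (α := ℝ) n) (show (0:ℝ) ≤ 1 - 2*|z| by linarith)]
    have h2 := mul_le_mul_of_nonneg_left hmain (mul_pos hπ hτ).le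
    nlinarith [h1, h2]
  have ha : Summable (fun n : ℕ => f ((n : ℤ) + 1)) :=
    Summable.of_nonneg_of_le (fun n => (Real.exp_pos _).le) hle₁ hgs.summable
  have hb : Summable (fun n : ℕ => f (-((n : ℤ) + 1))) :=
    Summable.of_nonneg_of_le (fun n => (Real.exp_pos _).le) hle₂ hgs.summable
  have htot : HasSum f ((∑' n : ℕ, f ((n : ℤ) + 1)) + f 0 + ∑' n : ℕ, f (-((n : ℤ) + 1))) := by
    exact HasSum.of_add_one_of_neg_add_one ha.hasSum hb.hasSum
  have hf0 : f 0 = 1 := by simp [hf]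
  have hA : (∑' n : ℕ, f ((n : ℤ) + 1)) ≤ C * (1 - r)⁻¹ := by
    calc (∑' n : ℕ, f ((n : ℤ) + 1)) ≤ ∑' n, g n := Summable.tsum_le_tsum hle₁ ha hgs.summable
    _ = C * (1 - r)⁻¹ := hgs.tsum_eq
  have hB : (∑' n : ℕ, f (-((n : ℤ) + 1))) ≤ C * (1 - r)⁻¹ := by
    calc (∑' n : ℕ, f (-((n : ℤ) + 1))) ≤ ∑' n, g n := Summable.tsum_le_tsum hle₂ hb hgs.summable
    _ = C * (1 - r)⁻¹ := hgs.tsum_eq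
  have hA0 : 0 ≤ (∑' n : ℕ, f ((n : ℤ) + 1)) := tsum_nonneg fun n => (Real.exp_pos _).le
  have hB0 : 0 ≤ (∑' n : ℕ, f (-((n : ℤ) + 1))) := tsum_nonneg fun n => (Real.exp_pos _).le
  rw [htot.tsum_eq, hf0]
  rw [abs_of_nonneg (by linarith)]
  rw [div_eq_mul_inv]
  linarith
end

section
/- For every real x ≥ 1 (or positive integer n), the two-sided Stirling bound holds: (x/e)^x √(2πx) · e^{1/(12x+1)} ≤ Γ(x+1) ≤ (x/e)^x √(2πx) · e^{1/(12x)}. -/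
open Real Filter Finset Topology

/-- The Binet/Robbins summand `g(t) = (t + 1/2) log(1 + 1/t) - 1`. -/
noncomputable def rg (t : ℝ) : ℝ := (t + 1/2) * Real.log (1 + 1/t) - 1

lemma rg_hasSum {t : ℝ} (ht : 0 < t) :
    HasSum (fun k : ℕ => (1 : ℝ) / (2 * (k+1 : ℕ) + 1) * ((1 / (2*t+1))^2)^(k+1)) (rg t) := by
  have h2t : (2*t+1) ≠ 0 := by positivity
  let f (k : ℕ) := (1 : ℝ) / (2 * (k:ℝ) + 1) * ((1 / (2*t+1)) ^ 2) ^ k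
  change HasSum (fun k => f (k+1)) _
  rw [hasSum_nat_add_iff]
  have hconv : HasSum f ((t + 1/2) * Real.log (1 + t⁻¹)) := by
    convert (hasSum_log_one_add_inv ht).mul_left (t + 1/2) using 1
    · rfl
    ext k
    dsimp only [f]
    rw [← pow_mul, pow_add]
    field_simp
  convert hconv using 1
  · rfl
  simp only [range_one, sum_singleton]
  dsimp only [f]
  rw [rg, one_div t]
  norm_num

lemma rg_nonneg {t : ℝ} (ht : 0 < t) : 0 ≤ rg t :=
  (rg_hasSum ht).nonneg fun k => by positivity

lemma rg_le {t : ℝ} (ht : 1 ≤ t) : rg t ≤ 1/(12*t) - 1/(12*(t+1)) := by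
  have ht0 : (0:ℝ) < t := lt_of_lt_of_le one_pos ht
  set u2 : ℝ := (1/(2*t+1))^2 with hu
  have hu0 : 0 ≤ u2 := sq_nonneg _
  have hu1 : u2 < 1 := by
    rw [hu, div_pow, one_pow, div_lt_one (by positivity)]
    nlinarith
  have hgeo : HasSum (fun k : ℕ => u2/3 * u2 ^ k) (u2/3 * (1 - u2)⁻¹) :=
    (hasSum_geometric_of_lt_one hu0 hu1).mul_left _
  have hle := hasSum_le (f := fun k : ℕ => (1 : ℝ) / (2 * (k+1 : ℕ) + 1) * u2^(k+1))
    (fun k => ?_) (rg_hasSum ht0) hgeo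
  · refine hle.trans (le_of_eq ?_)
    have h1 : (1:ℝ) - u2 ≠ 0 := by linarith
    have e1 : u2/3 * (1-u2)⁻¹ = 1/(12*t*(t+1)) := by
      have hA : (1:ℝ) - (1/(2*t+1))^2 = (4*t^2+4*t)/(2*t+1)^2 := by
        field_simp
        ring
      rw [hu, hA, inv_div]
      rw [eq_div_iff (by positivity)]
      field_simp
      ring
    rw [e1, div_sub_div _ _ (by positivity) (by positivity), div_eq_div_iff (by positivity) (by positivity)]
    ring
  · have h1 : (1:ℝ) / (2 * ((k:ℝ)+1) + 1) ≤ 1/3 := by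
      apply one_div_le_one_div_of_le <;> [norm_num; nlinarith [Nat.cast_nonneg (α := ℝ) k]]
    have h2 : u2 ^ (k+1) = u2 * u2 ^ k := by ring
    push_cast
    calc (1:ℝ)/(2*((k:ℝ)+1)+1) * u2^(k+1) = 1/(2*((k:ℝ)+1)+1) * (u2*u2^k) := by rw [h2]
      _ ≤ 1/3 * (u2*u2^k) := mul_le_mul_of_nonneg_right h1 (by positivity)
      _ = u2/3*u2^k := by ring

lemma rg_ge {t : ℝ} (ht : 1 ≤ t) : 1/(12*t+1) - 1/(12*(t+1)+1) ≤ rg t := by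
  have ht0 : (0:ℝ) < t := lt_of_lt_of_le one_pos ht
  set u2 : ℝ := (1/(2*t+1))^2 with hu
  have hu0 : 0 < u2 := by positivity
  have hu1 : u2 < 1 := by
    rw [hu, div_pow, one_pow, div_lt_one (by positivity)]
    nlinarith
  have hu3 : u2/3 < 1 := by linarith
  have hgeo : HasSum (fun k : ℕ => (u2/3) * (u2/3) ^ k) (u2/3 * (1 - u2/3)⁻¹) :=
    (hasSum_geometric_of_lt_one (by positivity) hu3).mul_left _
  have hle := hasSum_le (g := fun k : ℕ => (1 : ℝ) / (2 * (k+1 : ℕ) + 1) * u2^(k+1))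
    (fun k => ?_) hgeo (rg_hasSum ht0)
  · refine le_trans ?_ hle
    have h1 : (1:ℝ) - u2/3 ≠ 0 := by linarith
    have e1 : u2/3 * (1-u2/3)⁻¹ = 1/(12*t^2+12*t+2) := by
      have hA : (1:ℝ) - (1/(2*t+1))^2/3 = (12*t^2+12*t+2)/(3*(2*t+1)^2) := by
        field_simp
        ring
      rw [hu, hA, inv_div]
      rw [eq_div_iff (by positivity)]
      field_simp
    rw [e1, div_sub_div _ _ (by positivity) (by positivity), div_le_div_iff₀ (by positivity) (by positivity)]
    nlinarith
  · have hpow : ((2:ℝ) * ((k:ℝ)+1) + 1) ≤ 3 ^ (k+1) := by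
      induction k with
      | zero => norm_num
      | succ n ih => push_cast at ih ⊢; rw [pow_succ]; nlinarith
    have : (u2/3) * (u2/3)^k = u2^(k+1) / 3^(k+1) := by
      rw [div_pow]; ring
    push_cast
    rw [this, div_eq_mul_one_div (u2^(k+1)), mul_comm (1 / (2 * ((k:ℝ) + 1) + 1))]
    exact mul_le_mul_of_nonneg_left
      (one_div_le_one_div_of_le (by positivity) hpow) (by positivity)

lemma rg_sum_range {x : ℝ} (hx : 0 < x) (n : ℕ) :
    ∑ k ∈ range n, rg (x + k) =
      (x + n + 1/2) * Real.log (x + n) - (x + 1/2) * Real.log x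
        - (∑ k ∈ range n, Real.log (x + 1 + k)) - n := by
  induction n with
  | zero => simp
  | succ n ih =>
    have hxn : (0:ℝ) < x + n := by positivity
    have hlog : Real.log (1 + 1/(x + n)) = Real.log (x + n + 1) - Real.log (x + n) := by
      rw [show (1:ℝ) + 1/(x+n) = (x + n + 1)/(x + n) by field_simp,
        Real.log_div (by positivity) (by positivity)]
    rw [sum_range_succ, sum_range_succ, ih, rg, hlog]
    push_cast
    ring_nf

lemma log_gammaSeq {y : ℝ} (hy : 0 < y) {n : ℕ} (hn : 1 ≤ n) :
    Real.log (Real.GammaSeq y n) =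
      y * Real.log n + Real.log (n.factorial) - ∑ j ∈ range (n+1), Real.log (y + j) := by
  have hn0 : (0:ℝ) < n := by exact_mod_cast hn
  have hprod : (∏ j ∈ range (n+1), (y + (j:ℝ))) ≠ 0 :=
    Finset.prod_ne_zero_iff.mpr (fun j _ => by positivity)
  rw [Real.GammaSeq, Real.log_div (by positivity) hprod,
    Real.log_mul (by positivity) (by positivity),
    Real.log_rpow hn0, Real.log_prod (fun j _ => by positivity)]

lemma delta_tendsto (x : ℝ) (hx : 0 < x) :
    Tendsto (fun n : ℕ => (x + n + 3/2) * Real.log ((x + n + 1)/n)) atTop (𝓝 (x + 1)) := by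
  have h1 : Tendsto (fun n : ℕ => (n : ℝ) * Real.log (1 + (x+1)/n)) atTop (𝓝 (x+1)) := by
    have hp := Real.tendsto_one_add_div_pow_exp (x+1)
    have hl := (Real.continuousAt_log (Real.exp_pos (x+1)).ne').tendsto.comp hp
    rw [Real.log_exp] at hl
    refine hl.congr fun n => ?_
    rw [Function.comp_apply, Real.log_pow]
  have h2 : Tendsto (fun n : ℕ => Real.log (1 + (x+1)/n)) atTop (𝓝 0) := by
    have hd : Tendsto (fun n : ℕ => 1 + (x+1)/(n:ℝ)) atTop (𝓝 1) := by
      simpa using (tendsto_const_div_atTop_nhds_zero_nat (x+1)).const_add 1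
    have := (Real.continuousAt_log one_ne_zero).tendsto.comp hd
    simpa [Function.comp_def] using this
  have h3 : Tendsto (fun n : ℕ => (n:ℝ) * Real.log (1 + (x+1)/n)
      + (x + 3/2) * Real.log (1 + (x+1)/n)) atTop (𝓝 ((x+1) + (x+3/2) * 0)) :=
    h1.add (h2.const_mul _)
  rw [mul_zero, add_zero] at h3
  refine h3.congr' ?_
  filter_upwards [eventually_ge_atTop 1] with n hn
  have hn0 : (0:ℝ) < n := by exact_mod_cast hn
  have : (x + (n:ℝ) + 1)/n = 1 + (x+1)/n := by field_simp; ring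
  rw [this]
  ring

lemma rg_hasSum_total {x : ℝ} (hx : 1 ≤ x) :
    HasSum (fun k : ℕ => rg (x + k))
      (Real.log (Real.Gamma (x+1)) - (x + 1/2) * Real.log x + x
        - (1/2) * Real.log 2 - (1/2) * Real.log Real.pi) := by
  have hx0 : (0:ℝ) < x := lt_of_lt_of_le one_pos hx
  rw [hasSum_iff_tendsto_nat_of_nonneg (fun k => rg_nonneg (by positivity))]
  have hG : (0:ℝ) < Real.Gamma (x+1) := Real.Gamma_pos_of_pos (by linarith)
  have hA : Tendsto (fun n : ℕ => Real.log (Real.GammaSeq (x+1) n)) atTop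
      (𝓝 (Real.log (Real.Gamma (x+1)))) :=
    (Real.continuousAt_log hG.ne').tendsto.comp (Real.GammaSeq_tendsto_Gamma (x+1))
  have hS : Tendsto (fun n : ℕ => Real.log (Stirling.stirlingSeq n)) atTop
      (𝓝 (Real.log Real.pi / 2)) := by
    have := (Real.continuousAt_log (Real.sqrt_pos.mpr Real.pi_pos).ne').tendsto.comp
      Stirling.tendsto_stirlingSeq_sqrt_pi
    simpa [Function.comp_def, Real.log_sqrt Real.pi_pos.le] using this
  have hD := delta_tendsto x hx0
  have hcombo : Tendsto (fun n : ℕ => Real.log (Real.GammaSeq (x+1) n)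
      - Real.log (Stirling.stirlingSeq n) + (x + n + 3/2) * Real.log ((x + n + 1)/n)
      - (x + 1/2) * Real.log x - (1/2) * Real.log 2 - 1) atTop
      (𝓝 (Real.log (Real.Gamma (x+1)) - Real.log Real.pi / 2 + (x+1)
        - (x + 1/2) * Real.log x - (1/2) * Real.log 2 - 1)) := by
    exact ((((hA.sub hS).add hD).sub_const _).sub_const _).sub_const _
  have heq : (fun n : ℕ => Real.log (Real.GammaSeq (x+1) n)
      - Real.log (Stirling.stirlingSeq n) + (x + n + 3/2) * Real.log ((x + n + 1)/n)
      - (x + 1/2) * Real.log x - (1/2) * Real.log 2 - 1)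
      =ᶠ[atTop] (fun n : ℕ => ∑ k ∈ range (n+1), rg (x + k)) := ?_
  · have hval : Real.log (Real.Gamma (x+1)) - (x + 1/2) * Real.log x + x
        - (1/2) * Real.log 2 - (1/2) * Real.log Real.pi
        = Real.log (Real.Gamma (x+1)) - Real.log Real.pi / 2 + (x+1)
        - (x + 1/2) * Real.log x - (1/2) * Real.log 2 - 1 := by ring
    rw [hval]
    exact (tendsto_add_atTop_iff_nat
      (f := fun n : ℕ => ∑ k ∈ range n, rg (x + k)) 1).mp (hcombo.congr' heq)
  · filter_upwards [eventually_ge_atTop 1] with n hn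
    have hn0 : (0:ℝ) < n := by exact_mod_cast hn
    have hfact : Real.log (n.factorial) = Real.log (Stirling.stirlingSeq n)
        + 1/2 * Real.log (2*n) + n * Real.log (n / Real.exp 1) := by
      have := Stirling.log_stirlingSeq_formula n
      linarith
    symm
    rw [rg_sum_range hx0 (n+1), log_gammaSeq (by linarith : (0:ℝ) < x+1) hn]
    rw [Real.log_div (by positivity) hn0.ne']
    rw [Real.log_mul two_ne_zero hn0.ne', Real.log_div hn0.ne' (Real.exp_ne_zero 1),
      Real.log_exp] at hfact
    rw [hfact]
    push_cast
    ring_nf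

lemma hasSum_telescope' {b : ℕ → ℝ} (hmono : ∀ k, b (k+1) ≤ b k)
    (hlim : Tendsto b atTop (𝓝 0)) :
    HasSum (fun k => b k - b (k+1)) (b 0) := by
  rw [hasSum_iff_tendsto_nat_of_nonneg (fun k => sub_nonneg.2 (hmono k))]
  simp only [Finset.sum_range_sub' b]
  simpa using tendsto_const_nhds.sub hlim

lemma tendsto_inv_affine (x c d : ℝ) (hc : 0 < c) :
    Tendsto (fun k : ℕ => 1 / (c * (x + k) + d)) atTop (𝓝 0) := by
  simp only [one_div]
  apply Tendsto.inv_tendsto_atTop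
  have h2 := Tendsto.const_mul_atTop hc (tendsto_natCast_atTop_atTop (R := ℝ))
  have h3 := tendsto_atTop_add_const_right atTop (c*x+d) h2
  refine h3.congr fun k => by ring

theorem stmt_19 (x : ℝ) (hx : 1 ≤ x) :
    (x / Real.exp 1) ^ x * Real.sqrt (2 * Real.pi * x) * Real.exp (1 / (12 * x + 1))
      ≤ Real.Gamma (x + 1) ∧
    Real.Gamma (x + 1)
      ≤ (x / Real.exp 1) ^ x * Real.sqrt (2 * Real.pi * x) * Real.exp (1 / (12 * x)) := by
  have hx0 : (0:ℝ) < x := lt_of_lt_of_le one_pos hx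
  have hG : (0:ℝ) < Real.Gamma (x+1) := Real.Gamma_pos_of_pos (by linarith)
  have htotal := rg_hasSum_total hx
  -- lower bound on the Binet function
  have hlow : 1/(12*x+1) ≤ Real.log (Real.Gamma (x+1)) - (x + 1/2) * Real.log x + x
      - (1/2) * Real.log 2 - (1/2) * Real.log Real.pi := by
    have hb : HasSum (fun k : ℕ => 1/(12*(x+k)+1) - 1/(12*(x+(k+1:ℕ))+1)) (1/(12*(x+(0:ℕ))+1)) := by
      apply hasSum_telescope' (b := fun k : ℕ => 1/(12*(x+k)+1))
      · intro k
        apply one_div_le_one_div_of_le (by positivity)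
        push_cast
        linarith
      · exact tendsto_inv_affine x 12 1 (by norm_num)
    have hterm : ∀ k : ℕ, 1/(12*(x+k)+1) - 1/(12*(x+(k+1:ℕ))+1) ≤ rg (x+k) := by
      intro k
      have h := rg_ge (t := x + k) (by simpa using le_add_of_le_of_nonneg hx (Nat.cast_nonneg k))
      have e : (12*(x+(k+1:ℕ):ℝ)+1) = 12*((x+k)+1)+1 := by push_cast; ring
      rw [e]
      exact h
    have := hasSum_le hterm hb htotal
    simpa using this
  -- upper bound on the Binet function
  have hupp : Real.log (Real.Gamma (x+1)) - (x + 1/2) * Real.log x + x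
      - (1/2) * Real.log 2 - (1/2) * Real.log Real.pi ≤ 1/(12*x) := by
    have hb : HasSum (fun k : ℕ => 1/(12*(x+k)) - 1/(12*(x+(k+1:ℕ)))) (1/(12*(x+(0:ℕ)))) := by
      apply hasSum_telescope' (b := fun k : ℕ => 1/(12*(x+k)))
      · intro k
        apply one_div_le_one_div_of_le (by positivity)
        push_cast
        linarith
      · exact (tendsto_inv_affine x 12 0 (by norm_num)).congr fun k => by ring_nf
    have hterm : ∀ k : ℕ, rg (x+k) ≤ 1/(12*(x+k)) - 1/(12*(x+(k+1:ℕ))) := by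
      intro k
      have h := rg_le (t := x + k) (by simpa using le_add_of_le_of_nonneg hx (Nat.cast_nonneg k))
      have e : (12*(x+(k+1:ℕ):ℝ)) = 12*((x+k)+1) := by push_cast; ring
      rw [e]
      exact h
    have := hasSum_le hterm htotal hb
    simpa using this
  -- convert everything to exponentials
  have hre : ∀ c : ℝ, (x / Real.exp 1) ^ x * Real.sqrt (2*Real.pi*x) * Real.exp c
      = Real.exp ((x+1/2)*Real.log x - x + (1/2)*Real.log 2 + (1/2)*Real.log Real.pi + c) := by
    intro c
    rw [Real.rpow_def_of_pos (div_pos hx0 (Real.exp_pos 1)), Real.sqrt_eq_rpow,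
      Real.rpow_def_of_pos (by positivity), ← Real.exp_add, ← Real.exp_add]
    congr 1
    rw [Real.log_div hx0.ne' (Real.exp_ne_zero 1), Real.log_exp,
      Real.log_mul (by positivity) hx0.ne', Real.log_mul two_ne_zero Real.pi_ne_zero]
    ring
  have hGamma : Real.Gamma (x+1) = Real.exp (Real.log (Real.Gamma (x+1))) :=
    (Real.exp_log hG).symm
  constructor
  · rw [hre, hGamma]
    exact Real.exp_le_exp.mpr (by linarith)
  · rw [hre, hGamma]
    exact Real.exp_le_exp.mpr (by linarith)
end
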